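/- Harmonic functions with equal squares differ by a global sign: Let W ⊆ ℂ be a nonempty connected open set and let u, v : ℂ → ℝ be harmonic on W with u(z)² = v(z)² for all z ∈ W. Then v = u on all of W or v = −u on all of W. -/

import Mathlib

open Complex Filter Set ContinuousLinearMap

/-- `u : ℂ → ℝ` is harmonic on the open set `W ⊆ ℂ ≅ ℝ²`: it is twice continuously
differentiable on `W` and `∂²u/∂x² + ∂²u/∂y² = 0` on `W`. -/
def IsHarmonicOn (u : ℂ → ℝ) (W : Set ℂ) : Prop :=
  ContDiffOn ℝ 2 u W ∧
    ∀ z ∈ W, fderiv ℝ (fun w => fderiv ℝ u w 1) z 1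
      + fderiv ℝ (fun w => fderiv ℝ u w Complex.I) z Complex.I = 0

/-- On an open set, a `C²` function has a differentiable derivative, and the
derivative of `w ↦ fderiv u w t` is `e ↦ (fderiv (fderiv u) z) e t`. -/
lemma hasFDerivAt_fderiv_apply {u : ℂ → ℝ} {W : Set ℂ} (hW : IsOpen W)
    (hu : ContDiffOn ℝ 2 u W) {z : ℂ} (hz : z ∈ W) (t : ℂ) :
    HasFDerivAt (fun w => fderiv ℝ u w t)
      ((ContinuousLinearMap.apply ℝ ℝ t).comp (fderiv ℝ (fderiv ℝ u) z)) z := by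
  have h1 : ContDiffAt ℝ 1 (fderiv ℝ u) z :=
    (hu.contDiffAt (hW.mem_nhds hz)).fderiv_right (by norm_num)
  have h2 : HasFDerivAt (fderiv ℝ u) (fderiv ℝ (fderiv ℝ u) z) z :=
    (h1.differentiableAt one_ne_zero).hasFDerivAt
  exact (ContinuousLinearMap.apply ℝ ℝ t).hasFDerivAt.comp z h2

/-- Identity theorem for harmonic functions: a harmonic function on a connected open
set vanishing on a nonempty open subset vanishes everywhere. -/
lemma harmonic_eqOn_zero {W V : Set ℂ} (hWopen : IsOpen W) (hWconn : IsConnected W)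
    {h : ℂ → ℝ} (hh : IsHarmonicOn h W)
    (hVopen : IsOpen V) (hVne : V.Nonempty) (hVW : V ⊆ W)
    (hzero : ∀ z ∈ V, h z = 0) :
    ∀ z ∈ W, h z = 0 := by
  obtain ⟨hC, hlap⟩ := hh
  have hdiff : ∀ z ∈ W, DifferentiableAt ℝ h z := fun z hz =>
    (hC.contDiffAt (hWopen.mem_nhds hz)).differentiableAt two_ne_zero
  set F : ℂ → (ℂ →L[ℝ] ℝ) := fderiv ℝ h with hF
  -- the "holomorphic derivative" h_x - i h_y
  set G : ℂ → ℂ := fun w => ((F w 1 : ℝ) : ℂ) - I * ((F w I : ℝ) : ℂ) with hG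
  -- G is complex differentiable on W (Cauchy–Riemann)
  have hGdiff : ∀ z ∈ W, DifferentiableAt ℂ G z := by
    intro z hz
    set f'' : ℂ →L[ℝ] (ℂ →L[ℝ] ℝ) := fderiv ℝ F z with hf''
    have hF'z : HasFDerivAt F f'' z := by
      have h1 : ContDiffAt ℝ 1 F z :=
        (hC.contDiffAt (hWopen.mem_nhds hz)).fderiv_right (by norm_num)
      exact (h1.differentiableAt one_ne_zero).hasFDerivAt
    have hsymm : ∀ a b : ℂ, f'' a b = f'' b a := by
      intro a b
      apply second_derivative_symmetric_of_eventually (f := h) (f' := F) ?_ hF'z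
      filter_upwards [hWopen.mem_nhds hz] with y hy using (hdiff y hy).hasFDerivAt
    have hlapz : f'' 1 1 + f'' I I = 0 := by
      have e1 := (hasFDerivAt_fderiv_apply hWopen hC hz 1).fderiv
      have e2 := (hasFDerivAt_fderiv_apply hWopen hC hz I).fderiv
      have := hlap z hz
      rw [e1, e2] at this
      simpa using this
    -- real derivative of G
    have hA : HasFDerivAt (fun w => F w (1 : ℂ))
        ((ContinuousLinearMap.apply ℝ ℝ (1 : ℂ)).comp f'') z :=
      hasFDerivAt_fderiv_apply hWopen hC hz 1
    have hB : HasFDerivAt (fun w => F w I)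
        ((ContinuousLinearMap.apply ℝ ℝ I).comp f'') z :=
      hasFDerivAt_fderiv_apply hWopen hC hz I
    set L : ℂ →L[ℝ] ℂ :=
      Complex.ofRealCLM.comp ((ContinuousLinearMap.apply ℝ ℝ (1 : ℂ)).comp f'')
        - I • (Complex.ofRealCLM.comp ((ContinuousLinearMap.apply ℝ ℝ I).comp f'')) with hL
    have hGL : HasFDerivAt G L z := by
      have h1 : HasFDerivAt (fun w => ((F w 1 : ℝ) : ℂ))
          (Complex.ofRealCLM.comp ((ContinuousLinearMap.apply ℝ ℝ (1 : ℂ)).comp f'')) z :=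
        Complex.ofRealCLM.hasFDerivAt.comp z hA
      have h2 : HasFDerivAt (fun w => ((F w I : ℝ) : ℂ))
          (Complex.ofRealCLM.comp ((ContinuousLinearMap.apply ℝ ℝ I).comp f'')) z :=
        Complex.ofRealCLM.hasFDerivAt.comp z hB
      exact h1.sub (h2.const_mul I)
    have hLval : ∀ e : ℂ, L e = ((f'' e 1 : ℝ) : ℂ) - I * ((f'' e I : ℝ) : ℂ) := by
      intro e
      simp [hL, smul_eq_mul]
    -- Cauchy–Riemann condition
    have hCR : L I = I * L 1 := by
      rw [hLval, hLval, hsymm I 1]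
      have hII : (f'' I I : ℝ) = -(f'' 1 1) := by linarith [hlapz]
      rw [hII, mul_sub, ← mul_assoc, Complex.I_mul_I]
      push_cast
      ring
    -- upgrade to complex differentiability
    set M : ℂ →L[ℂ] ℂ := (L 1) • ContinuousLinearMap.id ℂ ℂ with hM
    have hres : M.restrictScalars ℝ = L := by
      apply ContinuousLinearMap.ext
      intro w
      have hw : w = w.re • (1 : ℂ) + w.im • I := by
        simp [Complex.real_smul, Complex.re_add_im]
      have : L w = w.re • L 1 + w.im • L I := by
        conv_lhs => rw [hw]
        rw [map_add, map_smul, map_smul]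
      rw [ContinuousLinearMap.coe_restrictScalars']
      show M w = L w
      rw [this, hCR, hM]
      simp [Complex.real_smul, smul_eq_mul]
      nth_rewrite 1 [← Complex.re_add_im w]
      ring
    exact (hasFDerivAt_of_restrictScalars ℝ hGL hres).differentiableAt
  have hGanal : AnalyticOnNhd ℂ G W := by
    apply DifferentiableOn.analyticOnNhd _ hWopen
    intro z hz
    exact (hGdiff z hz).differentiableWithinAt
  -- G vanishes on V
  have hGzeroV : ∀ z ∈ V, G z = 0 := by
    intro z hz
    have hFz : F z = 0 := by
      have : h =ᶠ[nhds z] (fun _ => (0 : ℝ)) :=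
        eventually_of_mem (hVopen.mem_nhds hz) (fun w hw => hzero w hw)
      rw [hF, this.fderiv_eq, fderiv_fun_const]
      rfl
    simp [hG, hFz]
  obtain ⟨z₀, hz₀⟩ := hVne
  have hev : G =ᶠ[nhds z₀] 0 :=
    eventually_of_mem (hVopen.mem_nhds hz₀) (fun w hw => hGzeroV w hw)
  have hGzeroW : EqOn G 0 W :=
    hGanal.eqOn_zero_of_preconnected_of_eventuallyEq_zero hWconn.isPreconnected (hVW hz₀) hev
  -- hence the gradient of h vanishes on W
  have hFzero : ∀ z ∈ W, F z = 0 := by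
    intro z hz
    have hGz : G z = 0 := hGzeroW hz
    have h1 : F z 1 = 0 ∧ F z I = 0 := by
      have hre := congrArg Complex.re hGz
      have him := congrArg Complex.im hGz
      simp [hG] at hre him
      exact ⟨hre, him⟩
    apply ContinuousLinearMap.ext
    intro w
    have hw : w = w.re • (1 : ℂ) + w.im • I := by
      simp [Complex.real_smul, Complex.re_add_im]
    conv_lhs => rw [hw]
    rw [map_add, map_smul, map_smul, h1.1, h1.2]
    simp
  -- h is locally constant, so the zero set is open; conclude by connectedness
  set S : Set ℂ := {z | z ∈ W ∧ h z = 0} with hS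
  have hSopen : IsOpen S := by
    rw [isOpen_iff_mem_nhds]
    rintro z ⟨hzW, hz0⟩
    obtain ⟨ε, εpos, hball⟩ := Metric.isOpen_iff.1 hWopen z hzW
    refine mem_of_superset (Metric.ball_mem_nhds z εpos) ?_
    intro y hy
    refine ⟨hball hy, ?_⟩
    have : h y = h z := by
      apply (convex_ball z ε).is_const_of_fderivWithin_eq_zero
        (hC.mono hball |>.differentiableOn two_ne_zero) ?_ hy (Metric.mem_ball_self εpos)
      intro x hx
      rw [fderivWithin_of_isOpen Metric.isOpen_ball hx]
      exact hFzero x (hball hx)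
    rw [this, hz0]
  have hWsub : W ⊆ S := by
    apply hWconn.isPreconnected.subset_of_closure_inter_subset hSopen
    · exact ⟨z₀, hVW hz₀, hVW hz₀, hzero z₀ hz₀⟩
    · rintro z ⟨hzc, hzW⟩
      refine ⟨hzW, ?_⟩
      by_contra hne
      have hcont : ContinuousAt h z := (hC.contDiffAt (hWopen.mem_nhds hzW)).continuousAt
      have : ∀ᶠ y in nhds z, h y ≠ 0 := hcont.eventually_ne hne
      obtain ⟨N, hN, hNopen, hzN⟩ := mem_nhds_iff.1 this
      obtain ⟨w, hwN, hwS⟩ := mem_closure_iff.1 hzc N hNopen hzN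
      exact hN hwN hwS.2
  exact fun z hz => (hWsub hz).2

/-- Sums and differences of harmonic functions are harmonic. -/
lemma isHarmonicOn_add_smul {u v : ℂ → ℝ} {W : Set ℂ} (hWopen : IsOpen W)
    (hu : IsHarmonicOn u W) (hv : IsHarmonicOn v W) (c : ℝ) :
    IsHarmonicOn (fun z => u z + c * v z) W := by
  obtain ⟨huC, hulap⟩ := hu
  obtain ⟨hvC, hvlap⟩ := hv
  refine ⟨huC.add (contDiffOn_const.mul hvC), ?_⟩
  intro z hz
  have hud : ∀ w ∈ W, DifferentiableAt ℝ u w := fun w hw =>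
    (huC.contDiffAt (hWopen.mem_nhds hw)).differentiableAt two_ne_zero
  have hvd : ∀ w ∈ W, DifferentiableAt ℝ v w := fun w hw =>
    (hvC.contDiffAt (hWopen.mem_nhds hw)).differentiableAt two_ne_zero
  have key : ∀ t : ℂ, fderiv ℝ (fun w => fderiv ℝ (fun y => u y + c * v y) w t) z t
      = fderiv ℝ (fun w => fderiv ℝ u w t) z t + c * fderiv ℝ (fun w => fderiv ℝ v w t) z t := by
    intro t
    have hev : (fun w => fderiv ℝ (fun y => u y + c * v y) w t)
        =ᶠ[nhds z] (fun w => fderiv ℝ u w t + c * fderiv ℝ v w t) := by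
      filter_upwards [hWopen.mem_nhds hz] with w hw
      rw [fderiv_fun_add (hud w hw) ((hvd w hw).const_mul c), fderiv_const_mul (hvd w hw)]
      simp
    rw [hev.fderiv_eq]
    have h1 := hasFDerivAt_fderiv_apply hWopen huC hz t
    have h2 := hasFDerivAt_fderiv_apply hWopen hvC hz t
    rw [(h1.fun_add (h2.const_mul c)).fderiv]
    simp [h1.fderiv, h2.fderiv]
  rw [key 1, key Complex.I]
  have h1 := hulap z hz
  have h2 := hvlap z hz
  linear_combination h1 + c * h2

/-- Harmonic functions with equal squares differ by a global sign: if `u, v` are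
harmonic on a nonempty connected open set `W` and `u² = v²` on `W`, then `v = u`
on all of `W` or `v = −u` on all of `W`. -/
theorem harmonic_sq_eq_implies_global_sign
    (W : Set ℂ) (hWopen : IsOpen W) (hWconn : IsConnected W)
    (u v : ℂ → ℝ)
    (hu : IsHarmonicOn u W) (hv : IsHarmonicOn v W)
    (hsq : ∀ z ∈ W, (u z) ^ 2 = (v z) ^ 2) :
    (∀ z ∈ W, v z = u z) ∨ (∀ z ∈ W, v z = -u z) := by
  by_cases hc : ∀ z ∈ W, v z = u z
  · exact Or.inl hc
  · right
    push_neg at hc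
    obtain ⟨z₀, hz₀W, hz₀ne⟩ := hc
    -- the open set where u ≠ v
    set V : Set ℂ := {z | z ∈ W ∧ u z ≠ v z} with hV
    have hVopen : IsOpen V := by
      rw [isOpen_iff_mem_nhds]
      rintro z ⟨hzW, hzne⟩
      have hcont : ContinuousAt (fun w => u w - v w) z := by
        have h1 : ContDiffAt ℝ 2 u z := hu.1.contDiffAt (hWopen.mem_nhds hzW)
        have h2 : ContDiffAt ℝ 2 v z := hv.1.contDiffAt (hWopen.mem_nhds hzW)
        exact (h1.continuousAt.sub h2.continuousAt)
      have hne0 : (fun w => u w - v w) z ≠ 0 := sub_ne_zero.2 hzne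
      filter_upwards [hcont.eventually_ne hne0, hWopen.mem_nhds hzW] with w hw hwW
      exact ⟨hwW, sub_ne_zero.1 hw⟩
    have hVne : V.Nonempty := ⟨z₀, hz₀W, fun h => hz₀ne h.symm⟩
    have hVW : V ⊆ W := fun z hz => hz.1
    -- g = u + v is harmonic and vanishes on V
    have hg : IsHarmonicOn (fun z => u z + 1 * v z) W := isHarmonicOn_add_smul hWopen hu hv 1
    have hgzero : ∀ z ∈ V, u z + 1 * v z = 0 := by
      rintro z ⟨hzW, hzne⟩
      have := hsq z hzW
      have hfac : (u z - v z) * (u z + v z) = 0 := by linear_combination this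
      rcases mul_eq_zero.1 hfac with h | h
      · exact absurd (sub_eq_zero.1 h) hzne
      · linarith
    have := harmonic_eqOn_zero hWopen hWconn hg hVopen hVne hVW hgzero
    intro z hz
    have := this z hz
    linarith
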